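/- In a temporal graph with lifetime 2, for the purpose of minimizing the reachability set of a single source by δ-delays, delaying only edges with label 1 suffices: for every set of at most κ δ-delays there is another set of at most κ δ-delays applied only to label-1 edges achieving a reachability set of the source that is a subset of the former. -/
import Mathlib


/-- `Reaches F s u t`: strict temporal path in the temporal graph given by the finite set `F`
of temporal edges `(u, v, label)`, arriving at time `t`. -/
inductive Reaches {V : Type*} (F : Finset (V × V × ℕ)) (s : V) : V → ℕ → Prop
  | refl : Reaches F s s 0
  | step {u v : V} {t t' : ℕ} : Reaches F s u t → (u, v, t') ∈ F → t < t' → Reaches F s v t'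

def TReach {V : Type*} (F : Finset (V × V × ℕ)) (s u : V) : Prop := ∃ t, Reaches F s u t

/-- Apply the delaying scheme `D` (giving the new label of each temporal edge). -/
def applyDelay {V : Type*} [DecidableEq V] (F : Finset (V × V × ℕ))
    (D : V × V × ℕ → ℕ) : Finset (V × V × ℕ) :=
  F.image fun e => (e.1, e.2.1, D e)

/-- `D` is a δ-delaying scheme: each label is delayed by at most `δ`. -/
def ValidDelay {V : Type*} (F : Finset (V × V × ℕ)) (δ : ℕ) (D : V × V × ℕ → ℕ) : Prop :=
  ∀ e ∈ F, e.2.2 ≤ D e ∧ D e ≤ e.2.2 + δ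

/-- Number of temporal edges actually delayed by `D`. -/
def numDelays {V : Type*} (F : Finset (V × V × ℕ)) (D : V × V × ℕ → ℕ) : ℕ :=
  (F.filter fun e => D e ≠ e.2.2).card

/-- In a temporal graph of lifetime 2, for minimizing the reachability set of a single source
by at most `κ` δ-delays, delaying only label-1 edges suffices. -/
theorem stmt7 {V : Type*} [Fintype V] [DecidableEq V] (F : Finset (V × V × ℕ))
    (hlife : ∀ e ∈ F, e.2.2 = 1 ∨ e.2.2 = 2) (s : V) (δ κ : ℕ) (hδ : 1 ≤ δ)
    (D : V × V × ℕ → ℕ) (hD : ValidDelay F δ D) (hκ : numDelays F D ≤ κ) :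
    ∃ D' : V × V × ℕ → ℕ, ValidDelay F δ D' ∧ numDelays F D' ≤ κ ∧
      (∀ e ∈ F, D' e ≠ e.2.2 → e.2.2 = 1) ∧
      {u | TReach (applyDelay F D') s u} ⊆ {u | TReach (applyDelay F D) s u} := by
  classical
  set D' : V × V × ℕ → ℕ := fun e => if e.2.2 = 1 ∧ D e ≠ 1 then 2 else e.2.2 with hD'def
  have hcond : ∀ e ∈ F, (D' e = 1 ∧ D e = 1) ∨ (D' e = 2 ∧ 2 ≤ D e) := by
    intro e he
    have hv := hD e he
    rcases hlife e he with h1 | h2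
    · by_cases hc : D e = 1
      · left; simp [hD'def, hc, h1]
      · right; constructor
        · simp [hD'def, h1, hc]
        · omega
    · right; constructor
      · simp [hD'def, h2]
      · omega
  refine ⟨D', ?_, ?_, ?_, ?_⟩
  · intro e he
    by_cases hc : e.2.2 = 1 ∧ D e ≠ 1
    · simp only [hD'def, if_pos hc]; omega
    · simp only [hD'def, if_neg hc]; omega
  · refine le_trans (Finset.card_le_card ?_) hκ
    intro e he
    simp only [Finset.mem_filter] at he ⊢
    refine ⟨he.1, ?_⟩
    by_cases hc : e.2.2 = 1 ∧ D e ≠ 1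
    · rw [hc.1]; exact hc.2
    · exfalso; apply he.2; simp [hD'def, if_neg hc]
  · intro e _ h
    by_cases hc : e.2.2 = 1 ∧ D e ≠ 1
    · exact hc.1
    · exfalso; apply h; simp [hD'def, if_neg hc]
  · have key : ∀ u t, Reaches (applyDelay F D') s u t →
        (∃ t2, Reaches (applyDelay F D) s u t2) ∧
        (t ≤ 1 → Reaches (applyDelay F D) s u t) := by
      intro u t h
      induction h with
      | refl => exact ⟨⟨0, .refl⟩, fun _ => .refl⟩
      | @step u v t t' hr hm hlt ih =>
        obtain ⟨e, heF, heq⟩ := Finset.mem_image.mp hm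
        obtain ⟨h1', h2', h3'⟩ : e.1 = u ∧ e.2.1 = v ∧ D' e = t' := by
          simpa [Prod.ext_iff] using heq
        have hmemD : (u, v, D e) ∈ applyDelay F D := by
          have := Finset.mem_image_of_mem (fun e => (e.1, e.2.1, D e)) heF
          simpa [applyDelay, h1', h2'] using this
        rcases hcond e heF with ⟨hd1, hd2⟩ | ⟨hd1, hd2⟩
        · have h0 : Reaches (applyDelay F D) s u t := ih.2 (by omega)
          have hstep : Reaches (applyDelay F D) s v (D e) :=
            .step h0 hmemD (by omega)
          refine ⟨⟨D e, hstep⟩, fun _ => ?_⟩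
          have : t' = D e := by omega
          rwa [this]
        · have h0 : Reaches (applyDelay F D) s u t := ih.2 (by omega)
          have hstep : Reaches (applyDelay F D) s v (D e) :=
            .step h0 hmemD (by omega)
          exact ⟨⟨D e, hstep⟩, fun h2 => by omega⟩
    rintro u ⟨t, ht⟩
    exact (key u t ht).1
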